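/- For α ∈ (0, 1/2) the map (Q_X, Q_Y) ↦ D_α(P_XY||Q_X Q_Y) fails to be convex in general: for X uniform on a set of size n ≥ 2 and Y = X (so P_XY(x,y) = (1/n)1{x=y}), the uniform product distribution gives D_α value log n, which is strictly larger than the minimum J_α(X;X) = (α/(1−α)) log n. -/

import Mathlib

open scoped ENNReal BigOperators
open Finset
open scoped NNReal

/-- Kullback-Leibler divergence between two PMFs on a finite set, valued in `EReal`
(`⊤` when `P` is not absolutely continuous w.r.t. `Q`). -/
noncomputable def klDiv {X : Type*} [Fintype X] (P Q : X → ℝ≥0∞) : EReal :=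
  if ∀ x, Q x = 0 → P x = 0 then
    (((∑ x, (P x).toReal * Real.log ((P x).toReal / (Q x).toReal)) : ℝ) : EReal)
  else ⊤

/-- Rényi divergence of order `α` (KL divergence at `α = 1`).  The ENNReal conventions
`0 * ⊤ = 0` and `0 ^ y = ⊤` for `y < 0` encode `0/0 = 0` and `p/0 = ∞`. -/
noncomputable def renyiDiv {X : Type*} [Fintype X] (α : ℝ) (P Q : X → ℝ≥0∞) : EReal :=
  if α = 1 then klDiv P Q
  else (((α - 1)⁻¹ : ℝ) : EReal) * ENNReal.log (∑ x, P x ^ α * Q x ^ (1 - α))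

/-- Relative α-entropy (Sundaresan's divergence); KL divergence at `α = 1`. -/
noncomputable def relAlphaEnt {X : Type*} [Fintype X] (α : ℝ) (P Q : X → ℝ≥0∞) : EReal :=
  if α = 1 then klDiv P Q
  else ((α / (1 - α) : ℝ) : EReal) * ENNReal.log (∑ x, P x * Q x ^ (α - 1))
    + ENNReal.log (∑ x, Q x ^ α)
    - (((1 - α)⁻¹ : ℝ) : EReal) * ENNReal.log (∑ x, P x ^ α)

/-- The set of PMFs on a finite type, as a subtype. -/
def PMFon (X : Type*) [Fintype X] : Type _ := {p : X → ℝ≥0∞ // ∑ x, p x = 1}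

noncomputable def margX {X Y : Type*} [Fintype X] [Fintype Y] (P : X × Y → ℝ≥0∞) : X → ℝ≥0∞ :=
  fun x => ∑ y, P (x, y)

noncomputable def margY {X Y : Type*} [Fintype X] [Fintype Y] (P : X × Y → ℝ≥0∞) : Y → ℝ≥0∞ :=
  fun y => ∑ x, P (x, y)

/-- Mutual information of a joint PMF. -/
noncomputable def mutualInfo {X Y : Type*} [Fintype X] [Fintype Y] (P : X × Y → ℝ≥0∞) : EReal :=
  klDiv P (fun p => margX P p.1 * margY P p.2)

/-- The dependence measure `J_α`. -/
noncomputable def Jalpha {X Y : Type*} [Fintype X] [Fintype Y] (α : ℝ) (P : X × Y → ℝ≥0∞) :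
    EReal :=
  ⨅ (Q : PMFon X × PMFon Y), renyiDiv α P (fun p => Q.1.1 p.1 * Q.2.1 p.2)

/-- The dependence measure `K_α`. -/
noncomputable def Kalpha {X Y : Type*} [Fintype X] [Fintype Y] (α : ℝ) (P : X × Y → ℝ≥0∞) :
    EReal :=
  ⨅ (Q : PMFon X × PMFon Y), relAlphaEnt α P (fun p => Q.1.1 p.1 * Q.2.1 p.2)

/-- Rényi entropy of order `β`. -/
noncomputable def renyiEnt {X : Type*} [Fintype X] (β : ℝ) (P : X → ℝ≥0∞) : EReal :=
  if β = 1 then (((∑ x, (P x).toReal * Real.log (P x).toReal⁻¹ : ℝ)) : EReal)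
  else (((1 - β)⁻¹ : ℝ) : EReal) * ENNReal.log (∑ x, P x ^ β)

/-- Min-entropy. -/
noncomputable def minEnt {X : Type*} [Fintype X] (P : X → ℝ≥0∞) : EReal :=
  - ENNReal.log (⨆ x, P x)


lemma amgm (a b : ℝ≥0∞) (ha : a ≠ ⊤) (hb : b ≠ ⊤) :
    a ^ (1/2 : ℝ) * b ^ (1/2 : ℝ) ≤ a / 2 + b / 2 := by
  lift a to ℝ≥0 using ha
  lift b to ℝ≥0 using hb
  have h := NNReal.geom_mean_le_arith_mean2_weighted (1/2) (1/2) a b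
    (by rw [← NNReal.coe_inj]; push_cast; norm_num)
  rw [← ENNReal.coe_rpow_of_nonneg _ (by norm_num : (0:ℝ) ≤ 1/2),
    ← ENNReal.coe_rpow_of_nonneg _ (by norm_num : (0:ℝ) ≤ 1/2), ← ENNReal.coe_mul]
  have h2 : ((a ^ (1/2:ℝ) * b ^ (1/2:ℝ) : ℝ≥0) : ℝ≥0∞) ≤ ((1/2 * a + 1/2 * b : ℝ≥0) : ℝ≥0∞) := by
    exact_mod_cast h
  refine h2.trans (le_of_eq ?_)
  push_cast
  rw [ENNReal.div_eq_inv_mul, ENNReal.div_eq_inv_mul]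
  norm_num
  rw [ENNReal.div_eq_inv_mul]

-- the sum ∑_x (q1 x * q2 x)^(1-α) ≤ 1

lemma Tbound {n : ℕ} (α : ℝ) (hα0 : 0 < α) (hα : α < 1/2) (q1 q2 : Fin n → ℝ≥0∞)
    (h1 : ∑ x, q1 x = 1) (h2 : ∑ x, q2 x = 1) :
    ∑ x, (q1 x * q2 x) ^ (1 - α) ≤ 1 := by
  have hq1 : ∀ x, q1 x ≤ 1 := fun x => h1 ▸ Finset.single_le_sum (fun i _ => zero_le) (mem_univ x)
  have hq2 : ∀ x, q2 x ≤ 1 := fun x => h2 ▸ Finset.single_le_sum (fun i _ => zero_le) (mem_univ x)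
  have step : ∀ x, (q1 x * q2 x) ^ (1 - α) ≤ q1 x / 2 + q2 x / 2 := by
    intro x
    have hle1 : q1 x * q2 x ≤ 1 := by
      calc q1 x * q2 x ≤ 1 * 1 := mul_le_mul' (hq1 x) (hq2 x)
        _ = 1 := one_mul 1
    have e1 : (q1 x * q2 x) ^ (1 - α) ≤ (q1 x * q2 x) ^ (1/2 : ℝ) :=
      ENNReal.rpow_le_rpow_of_exponent_ge hle1 (by linarith)
    have e2 : (q1 x * q2 x) ^ (1/2 : ℝ) = q1 x ^ (1/2:ℝ) * q2 x ^ (1/2:ℝ) :=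
      ENNReal.mul_rpow_of_nonneg _ _ (by norm_num)
    refine e1.trans ?_
    rw [e2]
    exact amgm _ _ (ne_top_of_le_ne_top ENNReal.one_ne_top (hq1 x)) (ne_top_of_le_ne_top ENNReal.one_ne_top (hq2 x))
  calc ∑ x, (q1 x * q2 x) ^ (1 - α) ≤ ∑ x, (q1 x / 2 + q2 x / 2) :=
        Finset.sum_le_sum fun x _ => step x
    _ = (∑ x, q1 x) / 2 + (∑ x, q2 x) / 2 := by
        simp only [div_eq_mul_inv, Finset.sum_add_distrib, ← Finset.sum_mul]
    _ = 1 := by rw [h1, h2, ENNReal.add_halves]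

-- the product-sum simplification

lemma sumf {n : ℕ} (α : ℝ) (hα0 : 0 < α) (q1 q2 : Fin n → ℝ≥0∞) :
    ∑ p : Fin n × Fin n,
        (if p.1 = p.2 then ((n : ℝ≥0∞))⁻¹ else 0) ^ α * (q1 p.1 * q2 p.2) ^ (1 - α)
      = ((n : ℝ≥0∞))⁻¹ ^ α * ∑ x, (q1 x * q2 x) ^ (1 - α) := by
  rw [Fintype.sum_prod_type, Finset.mul_sum]
  refine Finset.sum_congr rfl fun x _ => ?_
  rw [Finset.sum_eq_single x]
  · rw [if_pos rfl]
  · intro y _ hyx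
    rw [if_neg (Ne.symm hyx), ENNReal.zero_rpow_of_pos hα0, zero_mul]
  · intro h; exact absurd (mem_univ x) h


lemma hL (n : ℕ) (hn : 2 ≤ n) : ENNReal.log (n : ℝ≥0∞) = ((Real.log n : ℝ) : EReal) := by
  rw [ENNReal.log_pos_real (by exact_mod_cast (by omega : n ≠ 0) : (n:ℝ≥0∞) ≠ 0)
    (ENNReal.natCast_ne_top n)]
  simp


lemma part1 (n : ℕ) (hn : 2 ≤ n) (α : ℝ) (hα0 : 0 < α) (hα : α < 1/2) :
    renyiDiv α (fun p : Fin n × Fin n => if p.1 = p.2 then ((n : ℝ≥0∞))⁻¹ else 0)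
        (fun _ : Fin n × Fin n => ((n : ℝ≥0∞))⁻¹ * ((n : ℝ≥0∞))⁻¹) =
      ((Real.log n : ℝ) : EReal) := by
  have hα1 : α ≠ 1 := by linarith
  rw [renyiDiv, if_neg hα1]
  have hs := sumf α hα0 (fun _ : Fin n => ((n : ℝ≥0∞))⁻¹) (fun _ => ((n : ℝ≥0∞))⁻¹)
  rw [hs, Finset.sum_const, Finset.card_univ, Fintype.card_fin, nsmul_eq_mul,
    ENNReal.log_mul_add, ENNReal.log_mul_add, ENNReal.log_rpow, ENNReal.log_rpow,
    ENNReal.log_inv, ENNReal.log_mul_add, ENNReal.log_inv, hL n hn]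
  push_cast
  norm_cast
  have hne : α - 1 ≠ 0 := sub_ne_zero.2 hα1
  field_simp
  ring

lemma lowbd {n : ℕ} (hn : 2 ≤ n) {α : ℝ} (hα0 : 0 < α) (hα : α < 1/2)
    (Q : PMFon (Fin n) × PMFon (Fin n)) :
    ((α / (1 - α) * Real.log n : ℝ) : EReal) ≤
      renyiDiv α (fun p : Fin n × Fin n => if p.1 = p.2 then ((n : ℝ≥0∞))⁻¹ else 0)
        (fun p => Q.1.1 p.1 * Q.2.1 p.2) := by
  have hα1 : α ≠ 1 := by linarith
  rw [renyiDiv, if_neg hα1]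
  have hs := sumf α hα0 Q.1.1 Q.2.1
  rw [hs]
  have hT : ∑ x, (Q.1.1 x * Q.2.1 x) ^ (1 - α) ≤ 1 := Tbound α hα0 hα _ _ Q.1.2 Q.2.2
  have hS : ((n : ℝ≥0∞))⁻¹ ^ α * ∑ x, (Q.1.1 x * Q.2.1 x) ^ (1 - α) ≤ ((n : ℝ≥0∞))⁻¹ ^ α := by
    calc _ ≤ ((n : ℝ≥0∞))⁻¹ ^ α * 1 := mul_le_mul_right hT _
      _ = _ := mul_one _
  have hlog : ENNReal.log (((n : ℝ≥0∞))⁻¹ ^ α * ∑ x, (Q.1.1 x * Q.2.1 x) ^ (1 - α)) ≤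
      ((-(α * Real.log n) : ℝ) : EReal) := by
    refine (ENNReal.log_monotone hS).trans (le_of_eq ?_)
    rw [ENNReal.log_rpow, ENNReal.log_inv, hL n hn]
    push_cast
    norm_cast
    ring
  set c : ℝ := (1 - α)⁻¹ with hc
  have hcoef : ((α - 1)⁻¹ : ℝ) = -c := by rw [hc, ← inv_neg]; ring_nf
  rw [hcoef, EReal.coe_neg, EReal.neg_mul]
  have hmul : ((c : ℝ) : EReal) * ENNReal.log (((n : ℝ≥0∞))⁻¹ ^ α * ∑ x, (Q.1.1 x * Q.2.1 x) ^ (1 - α))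
      ≤ ((c : ℝ) : EReal) * ((-(α * Real.log n) : ℝ) : EReal) := by
    refine mul_le_mul_of_nonneg_left hlog ?_
    have : (0:ℝ) ≤ c := by
      rw [hc]
      have h1 : (0:ℝ) < 1 - α := by linarith
      positivity
    exact_mod_cast this
  have := EReal.neg_le_neg_iff.2 hmul
  refine le_trans (le_of_eq ?_) this
  rw [← EReal.coe_mul, ← EReal.coe_neg]
  norm_cast
  have h1α : (1:ℝ) - α ≠ 0 := by linarith
  field_simp [hc]
  rw [hc, mul_assoc, mul_comm (Real.log _), ← mul_assoc, mul_inv_cancel₀ h1α, one_mul]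


lemma attain {n : ℕ} (hn : 2 ≤ n) {α : ℝ} (hα0 : 0 < α) (hα : α < 1/2) :
    ∃ Q : PMFon (Fin n) × PMFon (Fin n),
      renyiDiv α (fun p : Fin n × Fin n => if p.1 = p.2 then ((n : ℝ≥0∞))⁻¹ else 0)
        (fun p => Q.1.1 p.1 * Q.2.1 p.2) = ((α / (1 - α) * Real.log n : ℝ) : EReal) := by
  have hα1 : α ≠ 1 := by linarith
  have hn0 : 0 < n := by omega
  have : NeZero n := ⟨by omega⟩
  set x0 : Fin n := ⟨0, hn0⟩
  have hδ : ∑ x : Fin n, (if x = x0 then (1:ℝ≥0∞) else 0) = 1 := by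
    rw [Finset.sum_ite_eq' univ x0 (fun _ => (1:ℝ≥0∞))]
    simp
  set δ : PMFon (Fin n) := ⟨fun x => if x = x0 then 1 else 0, hδ⟩ with hδdef
  refine ⟨(δ, δ), ?_⟩
  rw [renyiDiv, if_neg hα1]
  have hs := sumf α hα0 δ.1 δ.1
  rw [hs]
  have hT : ∑ x : Fin n, (δ.1 x * δ.1 x) ^ (1 - α) = 1 := by
    have : ∀ x : Fin n, (δ.1 x * δ.1 x) ^ (1 - α) = if x = x0 then 1 else 0 := by
      intro x
      by_cases h : x = x0
      · simp [hδdef, h]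
      · simp [hδdef, h, ENNReal.zero_rpow_of_pos (by linarith : (0:ℝ) < 1 - α)]
    rw [Finset.sum_congr rfl fun x _ => this x, Finset.sum_ite_eq' univ x0 (fun _ => (1:ℝ≥0∞))]
    simp
  rw [hT, mul_one, ENNReal.log_rpow, ENNReal.log_inv, hL n hn]
  rw [← EReal.coe_neg, ← EReal.coe_mul, ← EReal.coe_mul]
  norm_cast
  have h1α : (1:ℝ) - α ≠ 0 := by linarith
  have h3 : α - 1 ≠ 0 := sub_ne_zero.2 hα1
  field_simp [h3]
  ring


/-- for `α ∈ (0, 1/2)`, convexity fails: for the uniform diagonal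
distribution on `Fin n × Fin n` (`n ≥ 2`), the uniform product gives value `log n`,
while `J_α = (α/(1-α)) log n < log n`. -/
theorem stmt16 (n : ℕ) (hn : 2 ≤ n) (α : ℝ) (hα0 : 0 < α) (hα : α < 1/2) :
    renyiDiv α (fun p : Fin n × Fin n => if p.1 = p.2 then ((n : ℝ≥0∞))⁻¹ else 0)
        (fun _ : Fin n × Fin n => ((n : ℝ≥0∞))⁻¹ * ((n : ℝ≥0∞))⁻¹) =
      ((Real.log n : ℝ) : EReal) ∧
    Jalpha α (fun p : Fin n × Fin n => if p.1 = p.2 then ((n : ℝ≥0∞))⁻¹ else 0) =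
      ((α / (1 - α) * Real.log n : ℝ) : EReal) ∧
    ((α / (1 - α) * Real.log n : ℝ) : EReal) < ((Real.log n : ℝ) : EReal) := by
  refine ⟨part1 n hn α hα0 hα, ?_, ?_⟩
  · obtain ⟨Q, hQ⟩ := attain hn hα0 hα
    refine le_antisymm ?_ (le_iInf fun Q' => lowbd hn hα0 hα Q')
    rw [← hQ]
    exact iInf_le _ Q
  · have hlogn : 0 < Real.log n := Real.log_pos (by exact_mod_cast hn.trans_lt' one_lt_two)
    have h1 : (0:ℝ) < 1 - α := by linarith
    have h2 : α / (1 - α) < 1 := (div_lt_one h1).2 (by linarith)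
    have : α / (1 - α) * Real.log n < Real.log n := by
      calc α / (1 - α) * Real.log n < 1 * Real.log n := by
            exact mul_lt_mul_of_pos_right h2 hlogn
        _ = Real.log n := one_mul _
    exact_mod_cast this
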